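/- Suppose the matrices M_1,…,M_r satisfy conditions (H0), (H1), (H2) and (H3). Let m ∈ ℤ^r with m ≥ 0 and let a ∈ A. Then there exist l ≥ 0 and a word w ∈ W_l such that o(w) = a and, for every nonzero p ∈ ℤ^r with |p| ≤ m, the translate τ_p w and w do not agree on [0,l] ∩ [p, p+l] (i.e. w is not p-periodic). -/

import Mathlib

open Matrix

variable {r : ℕ} {A : Type*}

/-- The `j`-th standard basis vector of `ℤ^r`. -/
def evec (r : ℕ) (j : Fin r) : Fin r → ℤ := fun i => if i = j then 1 else 0

/-- `w` represents a word of shape `m` (only its values on `[0,m]` matter):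
`m ≥ 0` and the transition matrices are respected on the box `[0,m]`. -/
def IsWord (M : Fin r → Matrix A A ℤ) (m : Fin r → ℤ) (w : (Fin r → ℤ) → A) : Prop :=
  0 ≤ m ∧ ∀ (l : Fin r → ℤ) (j : Fin r), 0 ≤ l → l + evec r j ≤ m →
    M j (w (l + evec r j)) (w l) = 1

/-- Two representing functions agree on the box `[0,m]`; this is equality of
words of shape `m`. -/
def AgreeOn (m : Fin r → ℤ) (w w' : (Fin r → ℤ) → A) : Prop :=
  ∀ l : Fin r → ℤ, 0 ≤ l → l ≤ m → w l = w' l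

/-- The restriction `w|[k,k+n]`, as a word based at `0`: `(restrictW k w) i = w (i + k)`. -/
def restrictW (k : Fin r → ℤ) (w : (Fin r → ℤ) → A) : (Fin r → ℤ) → A :=
  fun i => w (i + k)

/-- `w` (a word of shape `m`) is `p`-periodic: the translate `τ_p w`, given by
`(τ_p w)(x) = w (x - p)`, agrees with `w` on `[0,m] ∩ [p,p+m]`. -/
def IsPeriodic (p m : Fin r → ℤ) (w : (Fin r → ℤ) → A) : Prop :=
  ∀ x : Fin r → ℤ, 0 ≤ x → x ≤ m → p ≤ x → x ≤ p + m → w (x - p) = w x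

/-- Condition (H0): each `M j` is nonzero. -/
def H0 (M : Fin r → Matrix A A ℤ) : Prop := ∀ j, M j ≠ 0

/-- Condition (H1): unique products of words. -/
def H1 (M : Fin r → Matrix A A ℤ) : Prop :=
  ∀ (m n : Fin r → ℤ) (u v : (Fin r → ℤ) → A),
    IsWord M m u → IsWord M n v → u m = v 0 →
      (∃ w, IsWord M (m + n) w ∧ AgreeOn m w u ∧ AgreeOn n (restrictW m w) v) ∧
      (∀ w w', IsWord M (m + n) w → AgreeOn m w u → AgreeOn n (restrictW m w) v →
        IsWord M (m + n) w' → AgreeOn m w' u → AgreeOn n (restrictW m w') v →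
        AgreeOn (m + n) w w')

/-- Condition (H2): the directed graph on `A` with an edge `a → b` whenever
`M i b a = 1` for some `i` is irreducible. -/
def H2 (M : Fin r → Matrix A A ℤ) : Prop :=
  ∀ a b : A, Relation.ReflTransGen (fun x y => ∃ i, M i y x = 1) a b

/-- Condition (H3): for each nonzero `p ∈ ℤ^r` there is a non-`p`-periodic word. -/
def H3 (M : Fin r → Matrix A A ℤ) : Prop :=
  ∀ p : Fin r → ℤ, p ≠ 0 → ∃ (m : Fin r → ℤ) (w : (Fin r → ℤ) → A),
    IsWord M m w ∧ ¬ IsPeriodic p m w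

/-- Condition (H1a): the matrices commute. -/
def H1a [Fintype A] (M : Fin r → Matrix A A ℤ) : Prop :=
  ∀ i j, M i * M j = M j * M i

/-- Condition (H1b): for `i < j`, the entries of `M i * M j` lie in `{0,1}`. -/
def H1b [Fintype A] (M : Fin r → Matrix A A ℤ) : Prop :=
  ∀ i j, i < j → ∀ a b : A, (M i * M j) b a = 0 ∨ (M i * M j) b a = 1

/-- Condition (H1c): for `i < j < k`, the entries of `M i * M j * M k` lie in `{0,1}`. -/
def H1c [Fintype A] (M : Fin r → Matrix A A ℤ) : Prop :=
  ∀ i j k, i < j → j < k → ∀ a b : A,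
    (M i * M j * M k) b a = 0 ∨ (M i * M j * M k) b a = 1

/-- Condition (H3*). -/
def H3star (M : Fin r → Matrix A A ℤ) : Prop :=
  ∀ (j : Fin r) (m : Fin r → ℤ), m j = 0 → ∀ w : (Fin r → ℤ) → A, IsWord M m w →
    ∃ u u', IsWord M (m + evec r j) u ∧ IsWord M (m + evec r j) u' ∧
      AgreeOn m u w ∧ AgreeOn m u' w ∧ u (evec r j) ≠ u' (evec r j)

/-- `x` represents the product word `uv` of `u ∈ W_m` and `v ∈ W_n`. -/
def IsProd (M : Fin r → Matrix A A ℤ) (m n : Fin r → ℤ)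
    (u v x : (Fin r → ℤ) → A) : Prop :=
  IsWord M (m + n) x ∧ AgreeOn m x u ∧ AgreeOn n (restrictW m x) v

section AuxLemmas

variable {M : Fin r → Matrix A A ℤ}

lemma evec_nonneg (j : Fin r) : (0 : Fin r → ℤ) ≤ evec r j := by
  intro i
  simp only [evec, Pi.zero_apply]
  split <;> norm_num

lemma isWord_const (M : Fin r → Matrix A A ℤ) (a : A) : IsWord M 0 (fun _ => a) := by
  refine ⟨le_refl _, fun l j hl hle => ?_⟩
  exfalso
  have h1 : (0 : ℤ) ≤ l j := hl j
  have h2 : (l + evec r j) j ≤ (0 : Fin r → ℤ) j := hle j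
  simp [evec] at h2
  omega

lemma evec_ne_zero (j : Fin r) : evec r j ≠ 0 := by
  intro h
  have := congrFun h j
  simp [evec] at this

lemma isWord_edge (M : Fin r → Matrix A A ℤ) {i : Fin r} {a b : A} (h : M i b a = 1) :
    IsWord M (evec r i) (fun x => if x = 0 then a else b) := by
  refine ⟨evec_nonneg i, fun l j hl hle => ?_⟩
  have hj : j = i := by
    by_contra hji
    have h1 : (0 : ℤ) ≤ l j := hl j
    have h2 : (l + evec r j) j ≤ evec r i j := hle j
    simp [evec, hji] at h2
    omega
  subst hj
  have hl0 : l = 0 := by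
    funext k
    have h1 : (0 : ℤ) ≤ l k := hl k
    have h2 : (l + evec r j) k ≤ evec r j k := hle k
    simp only [Pi.add_apply] at h2
    simp only [Pi.zero_apply]
    by_cases hk : k = j
    · subst hk; simp [evec] at h2; omega
    · simp [evec, hk] at h2; omega
  subst hl0
  rw [zero_add]
  simp only [evec_ne_zero j, if_neg, if_pos rfl]
  simpa [evec_ne_zero j] using h

lemma concatW (h1 : H1 M) {l n : Fin r → ℤ} {w v : (Fin r → ℤ) → A}
    (hw : IsWord M l w) (hv : IsWord M n v) (h : w l = v 0) :
    ∃ x, IsWord M (l + n) x ∧ AgreeOn l x w ∧ AgreeOn n (restrictW l x) v :=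
  (h1 l n w v hw hv h).1

lemma exists_path_word (h1 : H1 M) (h2 : H2 M) (a b : A) :
    ∃ (s : Fin r → ℤ) (u : (Fin r → ℤ) → A), IsWord M s u ∧ u 0 = a ∧ u s = b := by
  induction h2 a b with
  | refl => exact ⟨0, fun _ => a, isWord_const M a, rfl, rfl⟩
  | tail _ hstep ih =>
    obtain ⟨s, u, hu, hu0, hus⟩ := ih
    obtain ⟨i, hi⟩ := hstep
    have hedge := isWord_edge M hi
    obtain ⟨x, hx, hxu, hxe⟩ := concatW h1 hu hedge (by simpa using hus)
    refine ⟨s + evec r i, x, hx, ?_, ?_⟩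
    · rw [← hu0]; exact hxu 0 (le_refl 0) hu.1
    · have h' := hxe (evec r i) (evec_nonneg i) (le_refl _)
      simp only [restrictW] at h'
      rw [add_comm s (evec r i), h', if_neg (evec_ne_zero i)]

lemma not_periodic_mono {p l L : Fin r → ℤ} {x w : (Fin r → ℤ) → A} (hlL : l ≤ L)
    (hag : AgreeOn l x w) (h : ¬ IsPeriodic p l w) : ¬ IsPeriodic p L x := by
  intro hper
  apply h
  intro x0 h0 hx1 h2 h3
  have e1 : w x0 = x x0 := (hag x0 h0 hx1).symm
  have e2 : w (x0 - p) = x (x0 - p) :=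
    (hag _ (sub_nonneg.mpr h2) (sub_le_iff_le_add'.mpr h3)).symm
  rw [e1, e2]
  exact hper x0 h0 (hx1.trans hlL) h2 (h3.trans (add_le_add_right hlL p))

lemma not_periodic_of_subword {p n L k : Fin r → ℤ} {x v : (Fin r → ℤ) → A}
    (hk : 0 ≤ k) (hkn : k + n ≤ L)
    (hag : AgreeOn n (restrictW k x) v) (h : ¬ IsPeriodic p n v) :
    ¬ IsPeriodic p L x := by
  intro hper
  apply h
  intro x0 h0 hx1 h2 h3
  have e1 : v x0 = x (x0 + k) := (hag x0 h0 hx1).symm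
  have e2 : v (x0 - p) = x (x0 - p + k) :=
    (hag _ (sub_nonneg.mpr h2) (sub_le_iff_le_add'.mpr h3)).symm
  have e3 : x0 - p + k = (x0 + k) - p := by ring
  rw [e1, e2, e3]
  refine hper (x0 + k) (add_nonneg h0 hk) ?_ (h2.trans (le_add_of_nonneg_right hk)) ?_
  · calc x0 + k ≤ n + k := add_le_add_left hx1 k
      _ = k + n := add_comm n k
      _ ≤ L := hkn
  · calc x0 + k ≤ (p + n) + k := add_le_add_left h3 k
      _ = p + (k + n) := by ring
      _ ≤ p + L := add_le_add_right hkn p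

lemma key_lemma (M : Fin r → Matrix A A ℤ) (h1 : H1 M) (h2 : H2 M) (h3 : H3 M) (a : A)
    (S : Finset (Fin r → ℤ)) :
    ∃ l w, IsWord M l w ∧ w 0 = a ∧ ∀ p ∈ S, p ≠ 0 → ¬ IsPeriodic p l w := by
  classical
  induction S using Finset.induction_on with
  | empty => exact ⟨0, fun _ => a, isWord_const M a, rfl, by simp⟩
  | @insert p S hpS ih =>
    obtain ⟨l, w, hw, hw0, hper⟩ := ih
    by_cases hp : p = 0
    · refine ⟨l, w, hw, hw0, fun q hq hq0 => ?_⟩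
      rcases Finset.mem_insert.mp hq with h | h
      · exact absurd (h.trans hp) hq0
      · exact hper q h hq0
    · obtain ⟨n, v, hv, hnp⟩ := h3 p hp
      obtain ⟨s, u, hu, hu0, hus⟩ := exists_path_word h1 h2 (w l) (v 0)
      obtain ⟨x1, hx1, hx1w, hx1u⟩ := concatW h1 hw hu hu0.symm
      have hx1t : x1 (l + s) = v 0 := by
        have h' := hx1u s hu.1 (le_refl s)
        simp only [restrictW] at h'
        rw [add_comm l s, h', hus]
      obtain ⟨x2, hx2, hx2x1, hx2v⟩ := concatW h1 hx1 hv hx1t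
      have hls : (0 : Fin r → ℤ) ≤ l + s := add_nonneg hw.1 hu.1
      have hx2w : AgreeOn l x2 w := fun z hz0 hzl =>
        (hx2x1 z hz0 (hzl.trans (le_add_of_nonneg_right hu.1))).trans (hx1w z hz0 hzl)
      refine ⟨l + s + n, x2, hx2, ?_, ?_⟩
      · exact (hx2w 0 (le_refl 0) hw.1).trans hw0
      · intro q hq hq0
        rcases Finset.mem_insert.mp hq with h | h
        · subst h
          exact not_periodic_of_subword hls (le_refl (l + s + n)) hx2v hnp
        · have hlL : l ≤ l + s + n := by
            calc l ≤ l + s := le_add_of_nonneg_right hu.1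
              _ ≤ l + s + n := le_add_of_nonneg_right hv.1
          exact not_periodic_mono hlL hx2w (hper q h hq0)

end AuxLemmas

/-- under (H0)-(H3), for `m ≥ 0` and `a ∈ A` there is a word `w`
with `o(w) = a` which is not `p`-periodic for any nonzero `p` with `|p| ≤ m`. -/
theorem stmt_13 [Fintype A] [Nonempty A] (hr : 0 < r)
    (M : Fin r → Matrix A A ℤ)
    (hM : ∀ j (a b : A), M j b a = 0 ∨ M j b a = 1)
    (h0 : H0 M) (h1 : H1 M) (h2 : H2 M) (h3 : H3 M)
    (m : Fin r → ℤ) (hm : 0 ≤ m) (a : A) :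
    ∃ (l : Fin r → ℤ) (w : (Fin r → ℤ) → A),
      IsWord M l w ∧ w 0 = a ∧
      ∀ p : Fin r → ℤ, p ≠ 0 → (fun i => |p i|) ≤ m → ¬ IsPeriodic p l w := by
  classical
  obtain ⟨l, w, hw, hw0, hper⟩ :=
    key_lemma M h1 h2 h3 a (Fintype.piFinset fun i => Finset.Icc (-(m i)) (m i))
  refine ⟨l, w, hw, hw0, fun p hp hpm => hper p ?_ hp⟩
  rw [Fintype.mem_piFinset]
  intro i
  rw [Finset.mem_Icc]
  exact abs_le.mp (hpm i)
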